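/- Let G = (U, V, E) be a bipartite directed graph with arcs from U to V and from V to U, let s ∈ U be a vertex, and let A ⊆ V. Suppose u₁, u₂ ∈ U and v₁, v₂ ∈ V are such that (u₁,v₁) ∈ E and (u₂,v₂) ∈ E, but e = (u₁,v₂) ∉ E and e' = (u₂,v₁) ∉ E. Define haspath(G, s, A) ∈ {0,1} to be 1 iff there is a directed path in G from s to some vertex of A. Then haspath(G, s, A) + haspath(G + e + e', s, A) = haspath(G + e, s, A) + haspath(G + e', s, A). -/

import Mathlib

/-- One step along an arc of a bipartite directed graph with parts `U` and `V`,
arcs `E1 ⊆ U × V` and `E2 ⊆ V × U`. -/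
def BipStep {U V : Type*} (E1 : Set (U × V)) (E2 : Set (V × U)) :
    (U ⊕ V) → (U ⊕ V) → Prop
  | Sum.inl u, Sum.inr v => (u, v) ∈ E1
  | Sum.inr v, Sum.inl u => (v, u) ∈ E2
  | _, _ => False

open Classical in
/-- `haspath` equals 1 if some vertex of `A` is reachable from `s`, and 0 otherwise. -/
noncomputable def haspath {U V : Type*} (E1 : Set (U × V)) (E2 : Set (V × U))
    (s : U) (A : Set V) : ℤ :=
  if ∃ v ∈ A, Relation.ReflTransGen (BipStep E1 E2) (Sum.inl s) (Sum.inr v) then 1 else 0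

lemma bipstep_mono {U V : Type*} {E1 E1' : Set (U × V)} {E2 : Set (V × U)}
    (h : E1 ⊆ E1') {x y : U ⊕ V} (hs : BipStep E1 E2 x y) : BipStep E1' E2 x y := by
  cases x <;> cases y <;> simp only [BipStep] at hs ⊢ <;> first | exact h hs | exact hs

lemma reach_mono {U V : Type*} {E1 E1' : Set (U × V)} {E2 : Set (V × U)}
    (h : E1 ⊆ E1') {x y : U ⊕ V}
    (hr : Relation.ReflTransGen (BipStep E1 E2) x y) :
    Relation.ReflTransGen (BipStep E1' E2) x y :=
  Relation.ReflTransGen.mono (fun _ _ hs => bipstep_mono h hs) _ _ hr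

/-- Decomposition: a path in `insert (a,b) E1` either avoids the new arc,
or reaches `a` in `E1` and continues from `b` in `E1` (prefix before first use,
suffix after last use). -/
lemma reach_decomp {U V : Type*} {E1 : Set (U × V)} {E2 : Set (V × U)} {a : U} {b : V}
    {x y : U ⊕ V}
    (h : Relation.ReflTransGen (BipStep (insert (a, b) E1) E2) x y) :
    Relation.ReflTransGen (BipStep E1 E2) x y ∨
      (Relation.ReflTransGen (BipStep E1 E2) x (Sum.inl a) ∧
       Relation.ReflTransGen (BipStep E1 E2) (Sum.inr b) y) := by
  induction h using Relation.ReflTransGen.head_induction_on with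
  | refl => exact Or.inl .refl
  | head step _ ih =>
    rename_i c d _
    match c, d, step with
    | Sum.inl u, Sum.inr v, step =>
      have step' : (u, v) ∈ insert (a, b) E1 := step
      rcases step' with heq | hmem
      · -- the new arc: u = a, v = b
        have hu : u = a := congrArg Prod.fst heq
        have hv : v = b := congrArg Prod.snd heq
        subst hu hv
        rcases ih with h1 | ⟨_, h2⟩
        · exact Or.inr ⟨.refl, h1⟩
        · exact Or.inr ⟨.refl, h2⟩
      · rcases ih with h1 | ⟨h1, h2⟩
        · exact Or.inl (Relation.ReflTransGen.head (by exact hmem) h1)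
        · exact Or.inr ⟨Relation.ReflTransGen.head (by exact hmem) h1, h2⟩
    | Sum.inr v, Sum.inl u, step =>
      rcases ih with h1 | ⟨h1, h2⟩
      · exact Or.inl (Relation.ReflTransGen.head (by exact step) h1)
      · exact Or.inr ⟨Relation.ReflTransGen.head (by exact step) h1, h2⟩

theorem haspath_add_eq {U V : Type*} (E1 : Set (U × V)) (E2 : Set (V × U))
    (s : U) (A : Set V) (u₁ u₂ : U) (v₁ v₂ : V)
    (h11 : (u₁, v₁) ∈ E1) (h22 : (u₂, v₂) ∈ E1)
    (h12 : (u₁, v₂) ∉ E1) (h21 : (u₂, v₁) ∉ E1) :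
    haspath E1 E2 s A + haspath (E1 ∪ {(u₁, v₂), (u₂, v₁)}) E2 s A =
      haspath (insert (u₁, v₂) E1) E2 s A + haspath (insert (u₂, v₁) E1) E2 s A := by
  classical
  set e : U × V := (u₁, v₂)
  set e' : U × V := (u₂, v₁)
  have hunion : E1 ∪ {e, e'} = insert e' (insert e E1) := by
    ext x; simp [Set.mem_insert_iff, or_comm, or_assoc, or_left_comm]
  -- abbreviations for the four reachability propositions
  set P : Set (U × V) → Prop :=
    fun F => ∃ v ∈ A, Relation.ReflTransGen (BipStep F E2) (Sum.inl s) (Sum.inr v) with hP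
  have hPmono : ∀ {F F' : Set (U × V)}, F ⊆ F' → P F → P F' := by
    rintro F F' hsub ⟨v, hv, hr⟩
    exact ⟨v, hv, reach_mono hsub hr⟩
  -- (1) P (E1 ∪ {e,e'}) → P (insert e E1) ∨ P (insert e' E1)
  have key1 : P (E1 ∪ {e, e'}) → P (insert e E1) ∨ P (insert e' E1) := by
    rintro ⟨v, hv, hr⟩
    rw [hunion] at hr
    rcases reach_decomp hr with h1 | ⟨hsu, hbv⟩
    · exact Or.inl ⟨v, hv, h1⟩
    -- hsu : s → u₂ in insert e E1 ; hbv : v₁ → v in insert e E1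
    rcases reach_decomp hsu with hsu' | ⟨hsu1, hv2u2⟩
    · -- s → u₂ in E1
      rcases reach_decomp hbv with hbv' | ⟨hv1u1, hv2v⟩
      · -- v₁ → v in E1 : path via e'
        refine Or.inr ⟨v, hv, ?_⟩
        have h1 : Relation.ReflTransGen (BipStep (insert e' E1) E2) (Sum.inl s) (Sum.inl u₂) :=
          reach_mono (Set.subset_insert _ _) hsu'
        have h2 : BipStep (insert e' E1) E2 (Sum.inl u₂) (Sum.inr v₁) :=
          show (u₂, v₁) ∈ insert e' E1 from Set.mem_insert _ _
        exact (h1.tail h2).trans (reach_mono (Set.subset_insert _ _) hbv')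
      · -- s → u₂, u₂ → v₂ (h22), v₂ → v : all in E1
        refine Or.inl ⟨v, hv, reach_mono (Set.subset_insert _ _) ?_⟩
        exact (hsu'.tail (show BipStep E1 E2 (Sum.inl u₂) (Sum.inr v₂) from h22)).trans hv2v
    · -- s → u₁ in E1
      rcases reach_decomp hbv with hbv' | ⟨hv1u1, hv2v⟩
      · -- s → u₁ → v₁ (h11) → v in E1
        refine Or.inl ⟨v, hv, reach_mono (Set.subset_insert _ _) ?_⟩
        exact (hsu1.tail (show BipStep E1 E2 (Sum.inl u₁) (Sum.inr v₁) from h11)).trans hbv'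
      · -- s → u₁ →e v₂ → v in insert e E1
        refine Or.inl ⟨v, hv, ?_⟩
        have h1 : Relation.ReflTransGen (BipStep (insert e E1) E2) (Sum.inl s) (Sum.inl u₁) :=
          reach_mono (Set.subset_insert _ _) hsu1
        have h2 : BipStep (insert e E1) E2 (Sum.inl u₁) (Sum.inr v₂) :=
          show (u₁, v₂) ∈ insert e E1 from Set.mem_insert _ _
        exact (h1.tail h2).trans (reach_mono (Set.subset_insert _ _) hv2v)
  -- (2) P (insert e E1) → P (insert e' E1) → P E1
  have key2 : P (insert e E1) → P (insert e' E1) → P E1 := by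
    rintro ⟨v, hv, hr⟩ ⟨w, hw, hr'⟩
    rcases reach_decomp hr with h1 | ⟨hsu1, hv2v⟩
    · exact ⟨v, hv, h1⟩
    rcases reach_decomp hr' with h2 | ⟨hsu2, hv1w⟩
    · exact ⟨w, hw, h2⟩
    -- s → u₂ in E1, u₂ → v₂ (h22), v₂ → v in E1
    exact ⟨v, hv, (hsu2.tail (show BipStep E1 E2 (Sum.inl u₂) (Sum.inr v₂) from h22)).trans hv2v⟩
  have m1 : P E1 → P (insert e E1) := hPmono (Set.subset_insert _ _)
  have m2 : P E1 → P (insert e' E1) := hPmono (Set.subset_insert _ _)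
  have m3 : P (insert e E1) → P (E1 ∪ {e, e'}) := by
    rw [hunion]; exact hPmono (Set.subset_insert _ _)
  have m4 : P (insert e' E1) → P (E1 ∪ {e, e'}) := by
    rw [hunion]
    exact hPmono (Set.insert_subset_insert (Set.subset_insert _ _))
  unfold haspath
  change (if P E1 then (1:ℤ) else 0) + (if P (E1 ∪ {e, e'}) then (1:ℤ) else 0) =
    (if P (insert e E1) then (1:ℤ) else 0) + (if P (insert e' E1) then (1:ℤ) else 0)
  by_cases hA : P E1
  · rw [if_pos hA, if_pos (m1 hA), if_pos (m2 hA), if_pos (m3 (m1 hA))]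
  · rw [if_neg hA]
    by_cases hB : P (E1 ∪ {e, e'})
    · rw [if_pos hB]
      rcases key1 hB with hc | hd
      · rw [if_pos hc, if_neg (fun hd => hA (key2 hc hd))]; norm_num
      · rw [if_pos hd, if_neg (fun hc => hA (key2 hc hd))]
    · rw [if_neg hB, if_neg (fun h => hB (m3 h)), if_neg (fun h => hB (m4 h))]
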